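/- For every integer n ≥ 1, 0 = 2n · ((-1)^n (1/2)_n / n!) + Σ_{j=1}^{n} (C_{j-1} · (-1)^{n-j} · (1/2)_{n+j}) / ((1/2)_{2j} · (n-j)!), where C_j = (1/(j+1))·binomial(2j, j) is the j-th Catalan number and (a)_k denotes the rising factorial. -/

import Mathlib

open Finset

noncomputable def rf (a : ℚ) (k : ℕ) : ℚ := (ascPochhammer ℚ k).eval a

lemma rf_zero (a : ℚ) : rf a 0 = 1 := by simp [rf]

lemma rf_succ (a : ℚ) (k : ℕ) : rf a (k+1) = rf a k * (a + k) := by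
  simp [rf, ascPochhammer_succ_eval]

lemma rf_pos (k : ℕ) : 0 < rf (1/2) k := ascPochhammer_pos k _ (by norm_num)

lemma rf_add (a : ℚ) (n m : ℕ) : rf a (n + m) = rf a n * rf (a + n) m := by
  have h := ascPochhammer_mul (S := ℚ) n m
  have h2 := congrArg (Polynomial.eval a) h
  simpa [rf, Polynomial.eval_comp] using h2.symm

lemma rf_vandermonde (a b : ℚ) (k : ℕ) :
    rf (a + b) k = ∑ i ∈ range (k+1), (k.choose i : ℚ) * rf a i * rf b (k - i) := by
  induction k with
  | zero => simp [rf_zero]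
  | succ k ih =>
    rw [rf_succ, ih, Finset.sum_mul]
    have key : ∀ i ∈ range (k+1),
        (k.choose i : ℚ) * rf a i * rf b (k - i) * (a + b + k)
        = ((k.choose i : ℚ) * rf a (i+1) * rf b (k - i))
          + ((k.choose i : ℚ) * rf a i * rf b (k - i + 1)) := by
      intro i hi
      have hik : i ≤ k := by simpa [Nat.lt_succ_iff] using hi
      have hcast : ((k - i : ℕ) : ℚ) = (k : ℚ) - i := by
        push_cast [hik]; ring
      rw [rf_succ, rf_succ, hcast]
      ring
    rw [Finset.sum_congr rfl key, Finset.sum_add_distrib]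
    -- second sum split
    have h2 : ∑ i ∈ range (k+1), (k.choose i : ℚ) * rf a i * rf b (k - i + 1)
        = rf b (k+1) + ∑ i ∈ range (k+1), (k.choose (i+1) : ℚ) * rf a (i+1) * rf b (k - i) := by
      rw [Finset.sum_range_succ' (fun i => (k.choose i : ℚ) * rf a i * rf b (k - i + 1)) k]
      have hlast : ∑ i ∈ range (k+1), (k.choose (i+1) : ℚ) * rf a (i+1) * rf b (k - i)
          = ∑ i ∈ range k, (k.choose (i+1) : ℚ) * rf a (i+1) * rf b (k - (i+1) + 1) := by
        rw [Finset.sum_range_succ]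
        simp only [Nat.choose_succ_self, Nat.cast_zero, zero_mul, add_zero]
        refine Finset.sum_congr rfl ?_
        intro i hi
        have : k - (i+1) + 1 = k - i := by
          have : i < k := Finset.mem_range.mp hi
          omega
        rw [this]
      rw [hlast]
      simp [rf_zero]
      ring
    rw [h2]
    -- target split
    rw [Finset.sum_range_succ' (fun i => ((k+1).choose i : ℚ) * rf a i * rf b (k + 1 - i)) (k+1)]
    simp only [Nat.choose_zero_right, Nat.cast_one, one_mul, rf_zero, Nat.sub_zero]
    have h3 : ∀ i ∈ range (k+1),
        ((k+1).choose (i+1) : ℚ) * rf a (i+1) * rf b (k + 1 - (i+1))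
        = ((k.choose i : ℚ) * rf a (i+1) * rf b (k - i))
          + ((k.choose (i+1) : ℚ) * rf a (i+1) * rf b (k - i)) := by
      intro i hi
      have : k + 1 - (i+1) = k - i := by omega
      rw [this, Nat.choose_succ_succ]
      push_cast
      ring
    rw [Finset.sum_congr rfl h3, Finset.sum_add_distrib]
    ring

lemma rf_nat_mul_factorial (c i : ℕ) :
    rf ((c+1 : ℕ) : ℚ) i * (c.factorial : ℚ) = ((c + i).factorial : ℚ) := by
  induction i with
  | zero => simp [rf_zero]
  | succ i ih =>
    rw [rf_succ, mul_comm (rf _ i) _, mul_assoc, mul_comm _ (rf _ i * _), ih]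
    rw [show c + (i+1) = (c + i) + 1 by ring, Nat.factorial_succ]
    push_cast
    ring

lemma cat_rec (q : ℕ) : ((q:ℚ)+2) * catalan (q+1) = 2 * (2*q+1) * catalan q := by
  have h1 := succ_mul_catalan_eq_centralBinom (q+1)
  have h2 := Nat.succ_mul_centralBinom_succ q
  have h3 := succ_mul_catalan_eq_centralBinom q
  have : (q+1) * ((q+1+1) * catalan (q+1)) = (q+1) * (2 * (2*q+1) * catalan q) := by
    rw [h1, h2, ← h3]; ring
  have h4 : ((q+1+1) * catalan (q+1) : ℕ) = 2 * (2*q+1) * catalan q :=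
    Nat.eq_of_mul_eq_mul_left (by omega) this
  have := congrArg (fun x : ℕ => (x : ℚ)) h4
  push_cast at this
  linarith [this]

lemma choose_key (q s : ℕ) :
    ((2*q+2 : ℕ):ℚ) * (2*q+1) * ((2*q+s+2).choose (2*q+2) : ℚ)
      = ((2*q+s+1).choose (2*q) : ℚ) * ((2*q+s+2) * (s+1)) := by
  have e1 : ((2*q+s+2).choose (2*q+2) : ℚ)
      = ((2*q+s+2).factorial : ℚ) / (((2*q+2).factorial : ℚ) * (s.factorial : ℚ)) := by
    rw [Nat.cast_choose ℚ (by omega : 2*q+2 ≤ 2*q+s+2),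
      show 2*q+s+2 - (2*q+2) = s by omega]
  have e2 : ((2*q+s+1).choose (2*q) : ℚ)
      = ((2*q+s+1).factorial : ℚ) / (((2*q).factorial : ℚ) * ((s+1).factorial : ℚ)) := by
    rw [Nat.cast_choose ℚ (by omega : 2*q ≤ 2*q+s+1),
      show 2*q+s+1 - 2*q = s+1 by omega]
  rw [e1, e2]
  have f1 : ((2*q+s+2).factorial : ℚ) = (2*q+s+2) * ((2*q+s+1).factorial : ℚ) := by
    rw [show 2*q+s+2 = (2*q+s+1)+1 by ring, Nat.factorial_succ]; push_cast; ring
  have f2 : ((2*q+2).factorial : ℚ) = (2*q+2) * (2*q+1) * ((2*q).factorial : ℚ) := by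
    rw [show 2*q+2 = (2*q+1)+1 by ring, Nat.factorial_succ,
      show 2*q+1 = (2*q)+1 by ring, Nat.factorial_succ]; push_cast; ring
  have f3 : ((s+1).factorial : ℚ) = (s+1) * (s.factorial : ℚ) := by
    rw [Nat.factorial_succ]; push_cast; ring
  rw [f1, f2, f3]
  have h1 : ((2*q).factorial : ℚ) ≠ 0 := by positivity
  have h2 : (s.factorial : ℚ) ≠ 0 := by positivity
  field_simp
  push_cast; ring

lemma lemma1 (m : ℕ) :
    ∑ p ∈ range (m+1), (-1:ℚ)^(p+1) * (catalan p : ℚ) * ((m+1+p).choose (2*p+1) : ℚ) = -1 := by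
  induction m with
  | zero => simp
  | succ m ih =>
    set g : ℕ → ℚ := fun p =>
      (-1:ℚ)^p * (catalan p : ℚ) * (p+1) * p * ((m+1+p).choose (2*p) : ℚ) / ((m+1)*(m+2))
      with hg
    have tele : ∀ p ∈ range (m+1),
        (-1:ℚ)^(p+1) * (catalan p : ℚ) * ((m+1+p).choose (2*p) : ℚ) = g (p+1) - g p := by
      intro p hp
      have hpm : p ≤ m := by simpa [Nat.lt_succ_iff] using hp
      obtain ⟨s, rfl⟩ : ∃ s, m = p + s := ⟨m - p, by omega⟩
      rw [hg]
      simp only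
      have hck := choose_key p s
      have hcr := cat_rec p
      have e1 : p + s + 1 + (p+1) = 2*p+s+2 := by ring
      have e2 : 2*(p+1) = 2*p+2 := by ring
      have e3 : p + s + 1 + p = 2*p+s+1 := by ring
      rw [e1, e2, e3]
      have hne : ((p:ℚ)+s+1) * ((p:ℚ)+s+2) ≠ 0 := by positivity
      rw [div_sub_div_same, eq_div_iff (by push_cast at hne ⊢; exact hne)]
      push_cast at hck hcr ⊢
      have K : (catalan (p+1):ℚ) * (((p:ℚ))+2) * (((p:ℚ))+1) * ((2*p+s+2).choose (2*p+2) : ℚ)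
            + (catalan p:ℚ) * (((p:ℚ))+1) * (p:ℚ) * ((2*p+s+1).choose (2*p) : ℚ)
          = (catalan p:ℚ) * ((2*p+s+1).choose (2*p) : ℚ) * (((p:ℚ)+s+1)*((p:ℚ)+s+2)) := by
        linear_combination ((p:ℚ)+1) * ((2*p+s+2).choose (2*p+2) : ℚ) * hcr
          + (catalan p : ℚ) * hck
      linear_combination ((-1:ℚ)^p) * K
    have hsum : ∑ p ∈ range (m+1), ((-1:ℚ)^(p+1) * (catalan p : ℚ) * ((m+1+p).choose (2*p) : ℚ))
        = g (m+1) - g 0 := by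
      rw [Finset.sum_congr rfl tele, Finset.sum_range_sub g (m+1)]
    have hg0 : g 0 = 0 := by simp [hg]
    have hgm : g (m+1) = (-1:ℚ)^(m+1) * (catalan (m+1) : ℚ) := by
      rw [hg]
      simp only
      rw [show m+1+(m+1) = 2*(m+1) by ring, Nat.choose_self]
      have hne : ((m:ℚ)+1) * ((m:ℚ)+2) ≠ 0 := by positivity
      field_simp
      push_cast; ring
    -- now the main induction step
    rw [Finset.sum_range_succ]
    have pascal : ∀ p ∈ range (m+1),
        (-1:ℚ)^(p+1) * (catalan p : ℚ) * ((m+1+1+p).choose (2*p+1) : ℚ)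
        = (-1:ℚ)^(p+1) * (catalan p : ℚ) * ((m+1+p).choose (2*p+1) : ℚ)
          + (-1:ℚ)^(p+1) * (catalan p : ℚ) * ((m+1+p).choose (2*p) : ℚ) := by
      intro p hp
      rw [show m+1+1+p = (m+1+p)+1 by ring, show 2*p+1 = (2*p)+1 by ring,
        Nat.choose_succ_succ]
      push_cast
      ring
    rw [Finset.sum_congr rfl pascal, Finset.sum_add_distrib, ih, hsum, hg0, hgm]
    rw [show m+1+1+(m+1) = 2*(m+1)+1 by ring, show 2*(m+1)+1 = 2*(m+1)+1 by rfl]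
    rw [Nat.choose_self]
    push_cast
    ring

lemma lemma3 (n : ℕ) :
    ∑ i ∈ range n, rf (1/2) i / (i.factorial : ℚ) = 2 * n * rf (1/2) n / (n.factorial : ℚ) := by
  induction n with
  | zero => simp
  | succ n ih =>
    rw [Finset.sum_range_succ, ih, rf_succ, Nat.factorial_succ]
    have h1 : (n.factorial : ℚ) ≠ 0 := by positivity
    have h2 : ((n:ℚ)+1) ≠ 0 := by positivity
    field_simp
    push_cast; ring

lemma triangle (n : ℕ) (F : ℕ → ℕ → ℚ) :
    ∑ p ∈ range n, ∑ i ∈ range (n - p), F p i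
      = ∑ m ∈ range n, ∑ p ∈ range (m+1), F p (m - p) := by
  rw [Finset.sum_sigma', Finset.sum_sigma']
  refine Finset.sum_nbij' (i := fun x => ⟨x.1 + x.2, x.1⟩) (j := fun y => ⟨y.2, y.1 - y.2⟩)
    ?_ ?_ ?_ ?_ ?_
  · rintro ⟨p, i⟩ h
    simp only [Finset.mem_sigma, Finset.mem_range] at h ⊢
    omega
  · rintro ⟨m, p⟩ h
    simp only [Finset.mem_sigma, Finset.mem_range] at h ⊢
    omega
  · rintro ⟨p, i⟩ h
    simp only [Nat.add_sub_cancel_left]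
  · rintro ⟨m, p⟩ h
    simp only [Finset.mem_sigma, Finset.mem_range] at h
    simp only
    have : p + (m - p) = m := by omega
    rw [this]
  · rintro ⟨p, i⟩ h
    simp only [Nat.add_sub_cancel_left]

theorem stmt_5 (n : ℕ) (hn : 1 ≤ n) :
    (0 : ℚ) = 2 * n * ((-1 : ℚ) ^ n * rf (1/2) n / (n.factorial : ℚ)) +
      ∑ j ∈ Finset.Icc 1 n,
        ((catalan (j - 1) : ℚ) * (-1 : ℚ) ^ (n - j) * rf (1/2) (n + j)) /
          (rf (1/2) (2 * j) * ((n - j).factorial : ℚ)) := by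
  set G : ℕ → ℕ → ℚ := fun p i =>
    (catalan p : ℚ) * (-1:ℚ)^(n-1-p) * ((n-1-p).choose i : ℚ) * rf ((2*p+2 : ℕ) : ℚ) i
      * rf (1/2) (n-1-p-i) / ((n-1-p).factorial : ℚ) with hG
  have step1 : ∑ j ∈ Finset.Icc 1 n,
        ((catalan (j - 1) : ℚ) * (-1 : ℚ) ^ (n - j) * rf (1/2) (n + j)) /
          (rf (1/2) (2 * j) * ((n - j).factorial : ℚ))
      = ∑ p ∈ range n, ∑ i ∈ range (n - p), G p i := by
    rw [← Finset.Ico_add_one_right_eq_Icc, Finset.sum_Ico_eq_sum_range]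
    simp only [show n + 1 - 1 = n from rfl]
    refine Finset.sum_congr rfl ?_
    intro p hp
    have hpn : p < n := Finset.mem_range.mp hp
    obtain ⟨t, rfl⟩ : ∃ t, n = p + 1 + t := ⟨n - 1 - p, by omega⟩
    have e0 : 1 + p - 1 = p := by omega
    have e1 : p + 1 + t - (1 + p) = t := by omega
    have e2 : p + 1 + t + (1 + p) = (2*p+2) + t := by omega
    have e3 : 2 * (1 + p) = 2*p+2 := by omega
    have e4 : p + 1 + t - 1 - p = t := by omega
    rw [e0, e1, e2, e3]
    rw [rf_add (1/2) (2*p+2) t]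
    have hvdm := rf_vandermonde ((2*p+2 : ℕ) : ℚ) (1/2) t
    have hcomm : (1:ℚ)/2 + ((2*p+2 : ℕ) : ℚ) = ((2*p+2 : ℕ) : ℚ) + 1/2 := by ring
    have hnz : rf (1/2) (2*p+2) ≠ 0 := ne_of_gt (rf_pos _)
    have hfnz : ((t.factorial : ℚ)) ≠ 0 := by positivity
    rw [show ((2*p+2 : ℕ) : ℚ) = ((2*p+2 : ℕ) : ℚ) from rfl] at hvdm
    rw [hG]
    simp only [e4]
    rw [show (1:ℚ)/2 + ((2*p+2 : ℕ) : ℚ) = ((2*p+2 : ℕ) : ℚ) + 1/2 by push_cast; ring] at *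
    rw [hvdm, Finset.mul_sum, Finset.mul_sum, Finset.sum_div,
      show p + 1 + t - p = t + 1 by omega]
    refine Finset.sum_congr rfl ?_
    intro i hi
    field_simp
  rw [step1, triangle]
  have step4 : ∀ m ∈ range n, ∑ p ∈ range (m+1), G p (m - p)
      = (-1:ℚ)^(n+1) * rf (1/2) (n-1-m) / ((n-1-m).factorial : ℚ) := by
    intro m hm
    have hmn : m < n := Finset.mem_range.mp hm
    have per : ∀ p ∈ range (m+1), G p (m - p)
        = ((-1:ℚ)^(p+1) * (catalan p : ℚ) * ((m+1+p).choose (2*p+1) : ℚ))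
          * ((-1:ℚ)^n * rf (1/2) (n-1-m) / ((n-1-m).factorial : ℚ)) := by
      intro p hp
      have hpm : p ≤ m := by simpa [Nat.lt_succ_iff] using hp
      obtain ⟨v, rfl⟩ : ∃ v, m = p + v := ⟨m - p, by omega⟩
      obtain ⟨u, rfl⟩ : ∃ u, n = p + v + 1 + u := ⟨n - 1 - (p+v), by omega⟩
      have e1 : p + v + 1 + u - 1 - p = v + u := by omega
      have e2 : p + v - p = v := by omega
      have e3 : v + u - v = u := by omega
      have e4 : p + v + 1 + u - 1 - (p + v) = u := by omega
      have e5 : p + v + 1 + p = 2*p+1+v := by omega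
      rw [hG]
      simp only [e1, e2, e3, e4, e5]
      -- rf nat to factorial
      have hrf : rf ((2*p+2 : ℕ) : ℚ) v = ((2*p+1+v).factorial : ℚ) / ((2*p+1).factorial : ℚ) := by
        rw [eq_div_iff (by positivity)]
        have := rf_nat_mul_factorial (2*p+1) v
        rw [show 2*p+1+1 = 2*p+2 by omega] at this
        rw [this]
      have hc1 : ((v+u).choose v : ℚ) = ((v+u).factorial : ℚ) / ((v.factorial : ℚ) * (u.factorial : ℚ)) := by
        rw [Nat.cast_choose ℚ (by omega : v ≤ v + u), show v + u - v = u by omega]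
      have hc2 : ((2*p+1+v).choose (2*p+1) : ℚ)
          = ((2*p+1+v).factorial : ℚ) / (((2*p+1).factorial : ℚ) * (v.factorial : ℚ)) := by
        rw [Nat.cast_choose ℚ (by omega : 2*p+1 ≤ 2*p+1+v), show 2*p+1+v - (2*p+1) = v by omega]
      have hsq : (-1:ℚ)^(p+1) * (-1:ℚ)^(p+1) = 1 := by
        rw [← pow_add, show (p+1)+(p+1) = 2*(p+1) by ring, pow_mul]
        norm_num
      have hsign : (-1:ℚ)^(v+u) = (-1:ℚ)^(p+1) * (-1:ℚ)^(p+v+1+u) := by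
        have h5 : (-1:ℚ)^(p+v+1+u) = (-1:ℚ)^(p+1) * (-1:ℚ)^(v+u) := by
          rw [← pow_add, show p+1+(v+u) = p+v+1+u by ring]
        rw [h5, ← mul_assoc, hsq, one_mul]
      rw [hrf, hc1, hc2, hsign]
      have n1 : ((v+u).factorial : ℚ) ≠ 0 := by positivity
      have n2 : (v.factorial : ℚ) ≠ 0 := by positivity
      have n3 : (u.factorial : ℚ) ≠ 0 := by positivity
      have n4 : ((2*p+1).factorial : ℚ) ≠ 0 := by positivity
      field_simp
    rw [Finset.sum_congr rfl per, ← Finset.sum_mul, lemma1 m]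
    rw [pow_succ]
    ring
  rw [Finset.sum_congr rfl step4]
  have step5 : ∑ m ∈ range n, (-1:ℚ)^(n+1) * rf (1/2) (n-1-m) / ((n-1-m).factorial : ℚ)
      = (-1:ℚ)^(n+1) * (2 * n * rf (1/2) n / (n.factorial : ℚ)) := by
    have : ∀ m ∈ range n, (-1:ℚ)^(n+1) * rf (1/2) (n-1-m) / ((n-1-m).factorial : ℚ)
        = (-1:ℚ)^(n+1) * (rf (1/2) (n-1-m) / ((n-1-m).factorial : ℚ)) := by
      intro m _; ring
    rw [Finset.sum_congr rfl this, ← Finset.mul_sum]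
    congr 1
    rw [Finset.sum_range_reflect (fun i => rf (1/2) i / (i.factorial : ℚ)) n]
    exact lemma3 n
  rw [step5, pow_succ]
  ring
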